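/- The set P of prime numbers is dense in the topological space X := (ℕ⁺, τ). -/

import Mathlib

/-- `σ n` is the set of positive integers coprime to `n`. -/
def sigmaSet (n : ℕ+) : Set ℕ+ := {m : ℕ+ | Nat.gcd (n : ℕ) (m : ℕ) = 1}

/-- The base `β = {σ n : n ∈ ℕ⁺}`. -/
def betaBase : Set (Set ℕ+) := {s : Set ℕ+ | ∃ n : ℕ+, s = sigmaSet n}

/-- The topology `τ` on `ℕ⁺` generated by `β`. -/
def tau : TopologicalSpace ℕ+ := TopologicalSpace.generateFrom betaBase

lemma sigma_inter (a b : ℕ+) : sigmaSet (a * b) = sigmaSet a ∩ sigmaSet b := by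
  ext m
  simp only [sigmaSet, Set.mem_inter_iff, Set.mem_setOf_eq, PNat.mul_coe]
  exact Nat.coprime_mul_iff_left

/-- Every point of a `tau`-open set has a basic neighborhood inside it. -/
lemma exists_basic (U : Set ℕ+) (hU : TopologicalSpace.GenerateOpen betaBase U) :
    ∀ x ∈ U, ∃ n : ℕ+, x ∈ sigmaSet n ∧ sigmaSet n ⊆ U := by
  induction hU with
  | basic s hs =>
      obtain ⟨n, rfl⟩ := hs
      exact fun x hx => ⟨n, hx, le_refl _⟩
  | univ =>
      intro x _
      refine ⟨1, ?_, fun _ _ => trivial⟩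
      simp [sigmaSet]
  | inter s t _ _ ihs iht =>
      rintro x ⟨hxs, hxt⟩
      obtain ⟨a, hxa, has⟩ := ihs x hxs
      obtain ⟨b, hxb, hbt⟩ := iht x hxt
      refine ⟨a * b, ?_, ?_⟩
      · rw [sigma_inter]; exact ⟨hxa, hxb⟩
      · rw [sigma_inter]
        exact fun y hy => ⟨has hy.1, hbt hy.2⟩
  | sUnion S _ ih =>
      rintro x ⟨s, hs, hxs⟩
      obtain ⟨n, hxn, hns⟩ := ih s hs x hxs
      exact ⟨n, hxn, fun y hy => ⟨s, hs, hns hy⟩⟩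

/-- Every basic open set contains a prime. -/
lemma sigma_contains_prime (n : ℕ+) :
    ∃ p : ℕ+, p ∈ sigmaSet n ∧ (p : ℕ).Prime := by
  obtain ⟨p, hpn, hp⟩ := Nat.exists_infinite_primes ((n : ℕ) + 1)
  refine ⟨⟨p, hp.pos⟩, ?_, hp⟩
  show Nat.gcd (n : ℕ) p = 1
  have hnd : ¬ (p ∣ (n : ℕ)) := fun h =>
    absurd (Nat.le_of_dvd n.pos h) (by omega)
  exact Nat.coprime_comm.mp ((Nat.Prime.coprime_iff_not_dvd hp).mpr hnd)

theorem primes_dense : @Dense ℕ+ tau {p : ℕ+ | (p : ℕ).Prime} := by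
  rw [@dense_iff_inter_open ℕ+ tau]
  intro U hU ⟨x, hx⟩
  obtain ⟨n, hxn, hnU⟩ := exists_basic U hU x hx
  obtain ⟨p, hpn, hp⟩ := sigma_contains_prime n
  exact ⟨p, hnU hpn, hp⟩
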